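/- Let p(z) = z^n + a_{n-1}z^{n-1} + … + a_1 z + a_0 be a monic polynomial over ℂ of degree n ≥ 3 with some a_i ≠ 0, and let ρ > 0 be the (unique) positive real number satisfying ρ^n = Σ_{i=0}^{n-1} |a_i| ρ^i (the Cauchy bound of p). Then Γ(p) ≤ √9.45 · ρ; i.e., the relative overestimation of the Cauchy bound by Γ(p) does not exceed √9.45 ≈ 3.0741. -/

import Mathlib

open Finset

/-- The `k`-th term in the definition of `τ`: for `k = 3` it is `(|a (n-3)|/2.15)^(1/3)`,
for `k = 4` it is `(|a (n-4)|/2)^(1/4)`, and for `k ≥ 5` it is `|a (n-k)|^(1/k)`. -/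
noncomputable def tauTerm (n k : ℕ) (a : ℕ → ℂ) : ℝ :=
  if k = 3 then (‖a (n - 3)‖ / 2.15) ^ ((1 : ℝ) / 3)
  else if k = 4 then (‖a (n - 4)‖ / 2) ^ ((1 : ℝ) / 4)
  else (‖a (n - k)‖) ^ ((1 : ℝ) / k)

/-- `τ = max{(|a_{n-3}|/2.15)^(1/3), (|a_{n-4}|/2)^(1/4), |a_{n-5}|^(1/5), …, |a_0|^(1/n)}`. -/
noncomputable def tau (n : ℕ) (a : ℕ → ℂ) (hn : 3 ≤ n) : ℝ :=
  (Finset.Icc 3 n).sup' (Finset.nonempty_Icc.mpr hn) (fun k => tauTerm n k a)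

/-- The root bound `Γ(p)`. -/
noncomputable def Gamma (n : ℕ) (a : ℕ → ℂ) (hn : 3 ≤ n) : ℝ :=
  max (Real.sqrt 3.15 *
        Real.sqrt ((tau n a hn) ^ 2 + max (‖a (n - 2)‖) (2 * (tau n a hn) ^ 2)))
      ((‖a (n - 1)‖ +
        Real.sqrt ((‖a (n - 1)‖) ^ 2 +
          4 * ((tau n a hn) ^ 2 + max (‖a (n - 2)‖) (2.15 * (tau n a hn) ^ 2)))) / 2)

lemma coeff_le_aux (n : ℕ) (a : ℕ → ℂ) (ρ : ℝ) (hρ : 0 < ρ)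
    (hCauchy : ρ ^ n = ∑ i ∈ Finset.range n, ‖a i‖ * ρ ^ i)
    {i : ℕ} (hi : i < n) : ‖a i‖ ≤ ρ ^ (n - i) := by
  have h1 : ‖a i‖ * ρ ^ i ≤ ρ ^ n := by
    rw [hCauchy]
    exact Finset.single_le_sum (f := fun j => ‖a j‖ * ρ ^ j)
      (fun j _ => mul_nonneg (norm_nonneg _) (pow_nonneg hρ.le _))
      (Finset.mem_range.mpr hi)
  have h2 : ρ ^ n = ρ ^ (n - i) * ρ ^ i := by
    rw [← pow_add]; congr 1; omega
  rw [h2] at h1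
  exact le_of_mul_le_mul_right h1 (pow_pos hρ i)

lemma rpow_root_le (x ρ : ℝ) (hx : 0 ≤ x) (hρ : 0 < ρ) (k : ℕ) (hk : 1 ≤ k)
    (h : x ≤ ρ ^ k) : x ^ ((1 : ℝ) / k) ≤ ρ := by
  have h1 : x ^ ((1 : ℝ) / k) ≤ (ρ ^ k) ^ ((1 : ℝ) / k) :=
    Real.rpow_le_rpow hx h (by positivity)
  have hk0 : (k : ℝ) ≠ 0 := by positivity
  rw [← Real.rpow_natCast ρ k, ← Real.rpow_mul hρ.le, mul_one_div, div_self hk0,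
    Real.rpow_one] at h1
  exact h1

lemma tau_le (n : ℕ) (hn : 3 ≤ n) (a : ℕ → ℂ) (ρ : ℝ) (hρ : 0 < ρ)
    (hCauchy : ρ ^ n = ∑ i ∈ Finset.range n, ‖a i‖ * ρ ^ i) :
    tau n a hn ≤ ρ := by
  apply Finset.sup'_le
  intro k hk
  rw [Finset.mem_Icc] at hk
  have hik : n - k < n := by omega
  have hkey : ‖a (n - k)‖ ≤ ρ ^ k := by
    have := coeff_le_aux n a ρ hρ hCauchy hik
    have hnk : n - (n - k) = k := by omega
    rwa [hnk] at this
  unfold tauTerm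
  split_ifs with h3 h4
  · subst h3
    apply rpow_root_le _ _ (by positivity) hρ 3 (by norm_num)
    calc ‖a (n - 3)‖ / 2.15 ≤ ‖a (n - 3)‖ :=
          div_le_self (norm_nonneg _) (by norm_num)
      _ ≤ ρ ^ 3 := hkey
  · subst h4
    apply rpow_root_le _ _ (by positivity) hρ 4 (by norm_num)
    calc ‖a (n - 4)‖ / 2 ≤ ‖a (n - 4)‖ :=
          div_le_self (norm_nonneg _) (by norm_num)
      _ ≤ ρ ^ 4 := hkey
  · exact rpow_root_le _ _ (norm_nonneg _) hρ k (by omega) hkey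

theorem Gamma_le_sqrt_mul_cauchyBound (n : ℕ) (hn : 3 ≤ n) (a : ℕ → ℂ)
    (hne : ∃ i < n, a i ≠ 0) (ρ : ℝ) (hρ : 0 < ρ)
    (hCauchy : ρ ^ n = ∑ i ∈ Finset.range n, ‖a i‖ * ρ ^ i) :
    Gamma n a hn ≤ Real.sqrt 9.45 * ρ := by
  set t := tau n a hn with ht_def
  have ht : t ≤ ρ := tau_le n hn a ρ hρ hCauchy
  have ht0 : 0 ≤ t := by
    have h3 : (3 : ℕ) ∈ Finset.Icc 3 n := Finset.mem_Icc.mpr ⟨le_refl _, hn⟩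
    have := Finset.le_sup' (fun k => tauTerm n k a) h3
    refine le_trans ?_ this
    unfold tauTerm
    simp only [if_pos rfl]
    positivity
  have ht2 : t ^ 2 ≤ ρ ^ 2 := by nlinarith
  have hA2 : ‖a (n - 2)‖ ≤ ρ ^ 2 := by
    have h := coeff_le_aux n a ρ hρ hCauchy (show n - 2 < n by omega)
    have : n - (n - 2) = 2 := by omega
    rwa [this] at h
  have hA1 : ‖a (n - 1)‖ ≤ ρ := by
    have h := coeff_le_aux n a ρ hρ hCauchy (show n - 1 < n by omega)
    have : n - (n - 1) = 1 := by omega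
    rw [this, pow_one] at h
    exact h
  have hρ2 : (0:ℝ) ≤ ρ ^ 2 := by positivity
  unfold Gamma
  rw [← ht_def]
  apply max_le
  · -- first branch
    have hinner : t ^ 2 + max (‖a (n - 2)‖) (2 * t ^ 2) ≤ 3 * ρ ^ 2 := by
      have : max (‖a (n - 2)‖) (2 * t ^ 2) ≤ 2 * ρ ^ 2 :=
        max_le (by nlinarith) (by nlinarith)
      nlinarith
    calc Real.sqrt 3.15 * Real.sqrt (t ^ 2 + max (‖a (n - 2)‖) (2 * t ^ 2))
        ≤ Real.sqrt 3.15 * Real.sqrt (3 * ρ ^ 2) :=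
          mul_le_mul_of_nonneg_left (Real.sqrt_le_sqrt hinner) (Real.sqrt_nonneg _)
      _ = Real.sqrt (3.15 * (3 * ρ ^ 2)) := (Real.sqrt_mul (by norm_num) _).symm
      _ = Real.sqrt (9.45 * ρ ^ 2) := by congr 1; ring
      _ = Real.sqrt 9.45 * ρ := by
          rw [Real.sqrt_mul (by norm_num), Real.sqrt_sq hρ.le]
  · -- second branch
    have hinner : ‖a (n - 1)‖ ^ 2 +
        4 * (t ^ 2 + max (‖a (n - 2)‖) (2.15 * t ^ 2)) ≤ 13.6 * ρ ^ 2 := by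
      have hm : max (‖a (n - 2)‖) (2.15 * t ^ 2) ≤ 2.15 * ρ ^ 2 :=
        max_le (by nlinarith) (by nlinarith)
      have hA1' : ‖a (n - 1)‖ ^ 2 ≤ ρ ^ 2 := by
        have := norm_nonneg (a (n - 1)); nlinarith
      nlinarith
    have hsq : Real.sqrt (‖a (n - 1)‖ ^ 2 +
        4 * (t ^ 2 + max (‖a (n - 2)‖) (2.15 * t ^ 2))) ≤ Real.sqrt 13.6 * ρ := by
      calc Real.sqrt _ ≤ Real.sqrt (13.6 * ρ ^ 2) := Real.sqrt_le_sqrt hinner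
        _ = Real.sqrt 13.6 * ρ := by
            rw [Real.sqrt_mul (by norm_num), Real.sqrt_sq hρ.le]
    have h13 : Real.sqrt 13.6 ≤ 3.7 := by
      rw [show (13.6 : ℝ) = 13.6 from rfl]
      have : Real.sqrt 13.6 ≤ Real.sqrt (3.7 ^ 2) :=
        Real.sqrt_le_sqrt (by norm_num)
      rwa [Real.sqrt_sq (by norm_num)] at this
    have h9 : (3 : ℝ) ≤ Real.sqrt 9.45 := by
      have : Real.sqrt (3 ^ 2) ≤ Real.sqrt 9.45 := Real.sqrt_le_sqrt (by norm_num)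
      rwa [Real.sqrt_sq (by norm_num)] at this
    have := hsq
    nlinarith [Real.sqrt_nonneg (13.6 : ℝ)]
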